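/- Let n ∈ ℝ³ be a unit vector and β ∈ ℝ³. With 𝒩 := [[0_{3,3}, −V_n],[V_n, (β·n) I₃]] and ℳ_D := [[0_{3,3}, V_n],[V_n, |β·n| I₃]], the following hold: (i) (ℳ_D z, z) = |β·n| ‖p‖² ≥ 0 for all z = (b, p) ∈ ℝ⁶ (so ℳ_D is monotone); (ii) Ker(ℳ_D − 𝒩) + Ker(ℳ_D + 𝒩) = ℝ⁶. -/
import Mathlib


open Matrix

/-- The cross-product matrix `V_α`, characterized by `V_α s = α × s`. -/
def crossMat (α : Fin 3 → ℝ) : Matrix (Fin 3) (Fin 3) ℝ :=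
  !![0, -α 2, α 1; α 2, 0, -α 0; -α 1, α 0, 0]

lemma stmt14_aux1 (n : Fin 3 → ℝ) (c : ℝ) (z : Fin 3 ⊕ Fin 3 → ℝ) :
    (Matrix.fromBlocks 0 (crossMat n) (crossMat n) (|c| • 1) :
      Matrix (Fin 3 ⊕ Fin 3) (Fin 3 ⊕ Fin 3) ℝ).mulVec z ⬝ᵥ z
      = |c| * ∑ i, z (Sum.inr i) ^ 2 := by
  simp [Matrix.mulVec, dotProduct, Fintype.sum_sum_type, Matrix.fromBlocks,
    crossMat, Fin.sum_univ_three, Matrix.one_apply]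
  ring

lemma stmt14_aux2 (n : Fin 3 → ℝ) (hn : ∑ i, n i ^ 2 = 1) (c : ℝ) :
    LinearMap.ker ((Matrix.fromBlocks 0 (crossMat n) (crossMat n) (|c| • 1) :
        Matrix (Fin 3 ⊕ Fin 3) (Fin 3 ⊕ Fin 3) ℝ)
        - Matrix.fromBlocks 0 (-crossMat n) (crossMat n) (c • 1)).mulVecLin ⊔
    LinearMap.ker ((Matrix.fromBlocks 0 (crossMat n) (crossMat n) (|c| • 1) :
        Matrix (Fin 3 ⊕ Fin 3) (Fin 3 ⊕ Fin 3) ℝ)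
        + Matrix.fromBlocks 0 (-crossMat n) (crossMat n) (c • 1)).mulVecLin = ⊤ := by
  have hn3 : n 0 ^ 2 + n 1 ^ 2 + n 2 ^ 2 = 1 := by
    simpa [Fin.sum_univ_three] using hn
  rw [eq_top_iff]
  rintro z -
  rcases le_or_gt 0 c with h | h
  · rw [abs_of_nonneg h]
    refine Submodule.mem_sup.2
      ⟨Sum.elim (fun i => z (Sum.inl i) - c * (crossMat n *ᵥ (fun j => z (Sum.inr j))) i)
         (fun i => (∑ j, z (Sum.inr j) * n j) * n i), ?_,
       Sum.elim (fun i => c * (crossMat n *ᵥ (fun j => z (Sum.inr j))) i)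
         (fun i => z (Sum.inr i) - (∑ j, z (Sum.inr j) * n j) * n i), ?_, ?_⟩
    · rw [LinearMap.mem_ker]
      ext i
      rcases i with i | i <;> fin_cases i <;>
        simp [Matrix.mulVecLin_apply, Matrix.mulVec, dotProduct,
          Fintype.sum_sum_type, Matrix.fromBlocks, crossMat, Fin.sum_univ_three,
          Matrix.one_apply] <;> ring
    · rw [LinearMap.mem_ker]
      ext i
      rcases i with i | i <;> fin_cases i <;>
        simp [Matrix.mulVecLin_apply, Matrix.mulVec, dotProduct,
          Fintype.sum_sum_type, Matrix.fromBlocks, crossMat, Fin.sum_univ_three,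
          Matrix.one_apply] <;>
      first
        | ring1
        | linear_combination (2*c*z (Sum.inr 0))*hn3
        | linear_combination (-(2*c*z (Sum.inr 0)))*hn3
        | linear_combination (2*c*z (Sum.inr 1))*hn3
        | linear_combination (-(2*c*z (Sum.inr 1)))*hn3
        | linear_combination (2*c*z (Sum.inr 2))*hn3
        | linear_combination (-(2*c*z (Sum.inr 2)))*hn3
    · funext i; rcases i with i | i <;> simp
  · rw [abs_of_neg h]
    refine Submodule.mem_sup.2
      ⟨Sum.elim (fun i => z (Sum.inl i) - (∑ j, z (Sum.inl j) * n j) * n i) (fun _ => 0), ?_,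
       Sum.elim (fun i => (∑ j, z (Sum.inl j) * n j) * n i) (fun i => z (Sum.inr i)), ?_, ?_⟩
    · rw [LinearMap.mem_ker]
      ext i
      rcases i with i | i <;> fin_cases i <;>
        simp [Matrix.mulVecLin_apply, Matrix.mulVec, dotProduct,
          Fintype.sum_sum_type, Matrix.fromBlocks, crossMat, Fin.sum_univ_three,
          Matrix.one_apply] <;> ring
    · rw [LinearMap.mem_ker]
      ext i
      rcases i with i | i <;> fin_cases i <;>
        simp [Matrix.mulVecLin_apply, Matrix.mulVec, dotProduct,
          Fintype.sum_sum_type, Matrix.fromBlocks, crossMat, Fin.sum_univ_three,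
          Matrix.one_apply] <;> ring
    · funext i; rcases i with i | i <;> simp

/-- Dirichlet boundary matrices of the Friedrichs form of the vector
diffusion–advection–reaction problem: with `𝒩 = [[0, −V_n],[V_n, (β·n) I₃]]` and
`ℳ_D = [[0, V_n],[V_n, |β·n| I₃]]` for a unit vector `n`:
(i) `(ℳ_D z, z) = |β·n| ‖p‖² ≥ 0` for all `z = (b, p)`;
(ii) `Ker(ℳ_D − 𝒩) + Ker(ℳ_D + 𝒩) = ℝ⁶`. -/
theorem stmt14 (n β : Fin 3 → ℝ) (hn : ∑ i, n i ^ 2 = 1) :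
    let N : Matrix (Fin 3 ⊕ Fin 3) (Fin 3 ⊕ Fin 3) ℝ :=
      Matrix.fromBlocks 0 (-crossMat n) (crossMat n) ((β ⬝ᵥ n) • 1)
    let MD : Matrix (Fin 3 ⊕ Fin 3) (Fin 3 ⊕ Fin 3) ℝ :=
      Matrix.fromBlocks 0 (crossMat n) (crossMat n) (|β ⬝ᵥ n| • 1)
    (∀ z : Fin 3 ⊕ Fin 3 → ℝ,
      MD.mulVec z ⬝ᵥ z = |β ⬝ᵥ n| * ∑ i, z (Sum.inr i) ^ 2 ∧ 0 ≤ MD.mulVec z ⬝ᵥ z) ∧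
    LinearMap.ker (MD - N).mulVecLin ⊔ LinearMap.ker (MD + N).mulVecLin = ⊤ := by
  intro N MD
  refine ⟨fun z => ⟨stmt14_aux1 n (β ⬝ᵥ n) z, ?_⟩, stmt14_aux2 n hn (β ⬝ᵥ n)⟩
  have := stmt14_aux1 n (β ⬝ᵥ n) z
  show (0:ℝ) ≤ (Matrix.fromBlocks 0 (crossMat n) (crossMat n) (|β ⬝ᵥ n| • 1) :
      Matrix (Fin 3 ⊕ Fin 3) (Fin 3 ⊕ Fin 3) ℝ).mulVec z ⬝ᵥ z
  rw [this]
  positivity
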